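/- Let G be a graph with vertices ordered v_1, ..., v_n, and let G_i denote the subgraph induced by {v_1, ..., v_i}. Let K be a potential maximal clique of G_i for some i < n. If K is not a potential maximal clique of G_{i+1}, then for every j with i < j ≤ n, K is not a potential maximal clique of G_j. -/

import Mathlib

open SimpleGraph

variable {V : Type*}

/-- `C` is a connected component of `G \ K`:
nonempty, disjoint from `K`, connected, and maximal such. -/
def IsCompOf (G : SimpleGraph V) (K C : Set V) : Prop :=
  C.Nonempty ∧ Disjoint C K ∧ (G.induce C).Connected ∧
    ∀ D : Set V, C ⊆ D → Disjoint D K → (G.induce D).Connected → D = C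

/-- The neighborhood of a set `C`: vertices outside `C` with a neighbor in `C`. -/
def nbhd (G : SimpleGraph V) (C : Set V) : Set V :=
  {v | v ∉ C ∧ ∃ u ∈ C, G.Adj u v}

/-- `C` is a full component for `K` in `G`. -/
def IsFullComp (G : SimpleGraph V) (K C : Set V) : Prop :=
  IsCompOf G K C ∧ ∀ v ∈ K, ∃ u ∈ C, G.Adj u v

/-- Bouchitté–Todinca characterization of potential maximal cliques:
(a) no full component, (b) non-adjacent pairs of `K` covered by a common component. -/
def IsPMC (G : SimpleGraph V) (K : Set V) : Prop :=
  (∀ C : Set V, IsCompOf G K C → ¬ ∀ v ∈ K, ∃ u ∈ C, G.Adj u v) ∧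
  (∀ x ∈ K, ∀ y ∈ K, x ≠ y → ¬ G.Adj x y →
    ∃ C : Set V, IsCompOf G K C ∧ (∃ u ∈ C, G.Adj u x) ∧ (∃ u ∈ C, G.Adj u y))

/-- `C` is a connected component of `G[W] \ K`, where `G[W]` is the subgraph of
`G` induced by `W`. -/
def IsCompOfIn (G : SimpleGraph V) (W K C : Set V) : Prop :=
  C.Nonempty ∧ C ⊆ W ∧ Disjoint C K ∧ (G.induce C).Connected ∧
    ∀ D : Set V, C ⊆ D → D ⊆ W → Disjoint D K → (G.induce D).Connected → D = C

/-- `K` is a potential maximal clique of the subgraph of `G` induced by `W`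
(Bouchitté–Todinca characterization). -/
def IsPMCIn (G : SimpleGraph V) (W K : Set V) : Prop :=
  K ⊆ W ∧
  (∀ C : Set V, IsCompOfIn G W K C → ¬ ∀ v ∈ K, ∃ u ∈ C, G.Adj u v) ∧
  (∀ x ∈ K, ∀ y ∈ K, x ≠ y → ¬ G.Adj x y →
    ∃ C : Set V, IsCompOfIn G W K C ∧ (∃ u ∈ C, G.Adj u x) ∧ (∃ u ∈ C, G.Adj u y))

/-- Any nonempty connected subset of `W` disjoint from `K` extends to a
connected component of `G[W] \ K`. -/
lemma exists_comp_extend {n : ℕ} (G : SimpleGraph (Fin n)) (W K C : Set (Fin n))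
    (hne : C.Nonempty) (hCW : C ⊆ W) (hdis : Disjoint C K)
    (hconn : (G.induce C).Connected) :
    ∃ D, IsCompOfIn G W K D ∧ C ⊆ D := by
  classical
  set S : Set (Set (Fin n)) :=
    {D | C ⊆ D ∧ D ⊆ W ∧ Disjoint D K ∧ (G.induce D).Connected} with hS
  have hSfin : S.Finite := Set.toFinite S
  have hSne : S.Nonempty := ⟨C, subset_rfl, hCW, hdis, hconn⟩
  obtain ⟨D, hD, hmax⟩ := Set.Finite.exists_maximalFor id S hSfin hSne
  refine ⟨D, ⟨hne.mono hD.1, hD.2.1, hD.2.2.1, hD.2.2.2, ?_⟩, hD.1⟩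
  intro D' hDD' hD'W hD'K hD'conn
  exact le_antisymm (hmax (j := D') ⟨hD.1.trans hDD', hD'W, hD'K, hD'conn⟩ hDD') hDD'

theorem stmt6 {n : ℕ} (G : SimpleGraph (Fin n)) (i : ℕ) (hi : i < n)
    (K : Set (Fin n))
    (hKi : IsPMCIn G {v : Fin n | v.val < i} K)
    (hnot : ¬ IsPMCIn G {v : Fin n | v.val < i + 1} K) :
    ∀ j : ℕ, i < j → j ≤ n → ¬ IsPMCIn G {v : Fin n | v.val < j} K := by
  intro j hij hjn hj
  apply hnot
  have hsub1 : ({v : Fin n | v.val < i} : Set (Fin n)) ⊆ {v | v.val < i + 1} :=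
    fun v hv => Nat.lt_succ_of_lt hv
  have hsub2 : ({v : Fin n | v.val < i + 1} : Set (Fin n)) ⊆ {v | v.val < j} :=
    fun v hv => show v.val < j from lt_of_lt_of_le hv (Nat.succ_le_of_lt hij)
  refine ⟨fun v hv => hsub1 (hKi.1 hv), ?_, ?_⟩
  · intro C hC hfull
    obtain ⟨D, hD, hCD⟩ := exists_comp_extend G {v : Fin n | v.val < j} K C hC.1
      (fun v hv => hsub2 (hC.2.1 hv)) hC.2.2.1 hC.2.2.2.1
    exact hj.2.1 D hD (fun v hv => by
      obtain ⟨u, hu, hadj⟩ := hfull v hv; exact ⟨u, hCD hu, hadj⟩)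
  · intro x hx y hy hxy hadj
    obtain ⟨C, hC, ⟨u, hu, hux⟩, ⟨w, hw, hwy⟩⟩ := hKi.2.2 x hx y hy hxy hadj
    obtain ⟨D, hD, hCD⟩ := exists_comp_extend G {v : Fin n | v.val < i + 1} K C hC.1
      (fun v hv => hsub1 (hC.2.1 hv)) hC.2.2.1 hC.2.2.2.1
    exact ⟨D, hD, ⟨u, hCD hu, hux⟩, ⟨w, hCD hw, hwy⟩⟩
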